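/- Let L be a positive integer, let V ∈ ℂ^{L×r} be a fixed matrix with orthonormal columns (r ≤ L), let R ≤ L, and let C be a random matrix distributed according to the Haar probability measure on the unitary group U(L). Then, almost surely, the R×r matrix consisting of the first R rows of C V has rank min{r, R}. -/

import Mathlib

open Matrix MeasureTheory

noncomputable instance matrixMeasurableSpace {m n : ℕ} :
    MeasurableSpace (Matrix (Fin m) (Fin n) ℂ) :=
  (inferInstance : MeasurableSpace (Fin m → Fin n → ℂ))

namespace Stmt7Aux

open Complex

lemma countable_exp_eq (ζ : ℂ) : {x : ℝ | Complex.exp (Complex.I * x) = ζ}.Countable := by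
  rcases Set.eq_empty_or_nonempty {x : ℝ | Complex.exp (Complex.I * x) = ζ} with h | ⟨x₀, hx₀⟩
  · simp [h]
  · apply Set.Countable.mono _ (Set.countable_range fun n : ℤ => x₀ + n * (2 * Real.pi))
    intro x hx
    have hx' : Complex.exp (Complex.I * x) = Complex.exp (Complex.I * x₀) := by
      rw [hx, hx₀]
    rw [Complex.exp_eq_exp_iff_exists_int] at hx'
    obtain ⟨n, hn⟩ := hx'
    have h2 : (Complex.I : ℂ) * ((x : ℂ) - ((x₀ : ℂ) + n * (2 * Real.pi))) = 0 := by
      push_cast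
      linear_combination hn
    have h3 := (mul_eq_zero.mp h2).resolve_left Complex.I_ne_zero
    have h4 : (x : ℂ) = (x₀ : ℂ) + n * (2 * Real.pi) := by linear_combination h3
    have h5 : x = x₀ + n * (2 * Real.pi) := by exact_mod_cast h4
    exact ⟨n, h5.symm⟩

lemma countable_polyExp {ι : Type} [Fintype ι] (c : ι → ℂ) (d : ι → ℕ)
    (hw : ∃ ζ : ℂ, ∑ i, c i * ζ ^ d i ≠ 0) :
    {x : ℝ | ∑ i, c i * Complex.exp (Complex.I * x) ^ d i = 0}.Countable := by
  obtain ⟨ζ₀, hζ₀⟩ := hw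
  classical
  set p : Polynomial ℂ := ∑ i, Polynomial.C (c i) * Polynomial.X ^ d i with hp
  have hev : ∀ ζ : ℂ, p.eval ζ = ∑ i, c i * ζ ^ d i := by
    intro ζ
    simp [hp, Polynomial.eval_finset_sum]
  have hpne : p ≠ 0 := fun h => hζ₀ (by rw [← hev, h, Polynomial.eval_zero])
  have hfin : {ζ : ℂ | p.IsRoot ζ}.Finite := Polynomial.finite_setOf_isRoot hpne
  have hsub : {x : ℝ | ∑ i, c i * Complex.exp (Complex.I * x) ^ d i = 0} ⊆
      ⋃ ζ ∈ {ζ : ℂ | p.IsRoot ζ}, {x : ℝ | Complex.exp (Complex.I * x) = ζ} := by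
    intro x hx
    have : p.IsRoot (Complex.exp (Complex.I * x)) := by
      simp only [Polynomial.IsRoot, hev]
      exact hx
    exact Set.mem_biUnion this rfl
  exact Set.Countable.mono hsub
    (Set.Countable.biUnion hfin.countable fun ζ _ => countable_exp_eq ζ)

theorem polyNull : ∀ (n : ℕ) (ι : Type) (_ : Fintype ι) (c : ι → ℂ) (e : ι → Fin n → ℕ),
    (∃ z : Fin n → ℂ, (∑ i, c i * ∏ j, z j ^ e i j) ≠ 0) →
    volume {θ : Fin n → ℝ | (∑ i, c i * ∏ j, Complex.exp (Complex.I * θ j) ^ e i j) = 0} = 0 := by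
  intro n
  induction n with
  | zero =>
    intro ι _ c e hw
    obtain ⟨z₀, hz₀⟩ := hw
    have hc : (∑ i, c i) ≠ 0 := by simpa using hz₀
    have h0 : {θ : Fin 0 → ℝ | (∑ i, c i * ∏ j, Complex.exp (Complex.I * θ j) ^ e i j) = 0} = ∅ := by
      ext θ
      simpa using hc
    rw [h0, measure_empty]
  | succ n IH =>
    intro ι _ c e hw
    obtain ⟨z₀, hz₀⟩ := hw
    set ζ₀ : ℂ := z₀ 0 with hζ₀def
    -- inner coefficients
    have hsplit : ∀ (z : Fin (n+1) → ℂ) i,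
        c i * ∏ j, z j ^ e i j
          = (c i * z 0 ^ e i 0) * ∏ j : Fin n, z j.succ ^ e i j.succ := by
      intro z i
      rw [Fin.prod_univ_succ]
      ring
    have hw' : (∑ i, (c i * ζ₀ ^ e i 0) * ∏ j : Fin n, (fun j => z₀ j.succ) j ^ e i j.succ) ≠ 0 := by
      intro h; apply hz₀; rw [Finset.sum_congr rfl fun i _ => hsplit z₀ i]; exact h
    have hN := IH ι ‹Fintype ι› (fun i => c i * ζ₀ ^ e i 0) (fun i j => e i j.succ) ⟨_, hw'⟩
    -- product-space set
    set f : ℝ × (Fin n → ℝ) → ℂ := fun q =>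
      ∑ i, c i * (Complex.exp (Complex.I * q.1) ^ e i 0 *
        ∏ j : Fin n, Complex.exp (Complex.I * q.2 j) ^ e i j.succ) with hfdef
    have hf : Continuous f := by
      apply continuous_finset_sum
      intro i _
      apply continuous_const.mul
      apply Continuous.mul
      · exact (Complex.continuous_exp.comp
          (continuous_const.mul (Complex.continuous_ofReal.comp continuous_fst))).pow _
      · apply continuous_finset_prod
        intro j _
        exact (Complex.continuous_exp.comp (continuous_const.mul
          (Complex.continuous_ofReal.comp ((continuous_apply j).comp continuous_snd)))).pow _
    set S : Set (ℝ × (Fin n → ℝ)) := f ⁻¹' {0} with hSdef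
    have hS : MeasurableSet S := hf.measurable (measurableSet_singleton 0)
    -- slices countable
    have hslice : ∀ θ' : Fin n → ℝ,
        (∑ i, (c i * ζ₀ ^ e i 0) *
          ∏ j : Fin n, Complex.exp (Complex.I * θ' j) ^ e i j.succ) ≠ 0 →
        {x : ℝ | (x, θ') ∈ S}.Countable := by
      intro θ' hθ'
      have := countable_polyExp
        (fun i => c i * ∏ j : Fin n, Complex.exp (Complex.I * θ' j) ^ e i j.succ)
        (fun i => e i 0) ⟨ζ₀, by
          refine fun h => hθ' ?_
          rw [← h]
          apply Finset.sum_congr rfl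
          intro i _
          ring⟩
      apply Set.Countable.mono _ this
      intro x hx
      simp only [Set.mem_setOf_eq, hSdef, Set.mem_preimage, Set.mem_singleton_iff, hfdef] at hx ⊢
      rw [← hx]
      apply Finset.sum_congr rfl
      intro i _
      ring
    -- Fubini
    have hmp := MeasureTheory.volume_preserving_piFinSuccAbove (fun _ : Fin (n+1) => ℝ) 0
    set eqv := MeasurableEquiv.piFinSuccAbove (fun _ : Fin (n+1) => ℝ) 0 with heqv
    have hpre : eqv ⁻¹' S
        = {θ : Fin (n+1) → ℝ | (∑ i, c i * ∏ j, Complex.exp (Complex.I * θ j) ^ e i j) = 0} := by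
      ext θ
      have happ : eqv θ = (θ 0, fun j : Fin n => θ ((0 : Fin (n+1)).succAbove j)) := rfl
      simp only [Set.mem_preimage, happ, hSdef, Set.mem_singleton_iff, hfdef, Set.mem_setOf_eq]
      constructor
      · intro h
        rw [← h]
        apply Finset.sum_congr rfl
        intro i _
        rw [Fin.prod_univ_succ]
        simp [Fin.zero_succAbove]
      · intro h
        rw [← h]
        apply Finset.sum_congr rfl
        intro i _
        rw [Fin.prod_univ_succ]
        simp [Fin.zero_succAbove]
    have h1 : volume (eqv ⁻¹' S) = volume S := by
      rw [← hmp.map_eq, MeasureTheory.Measure.map_apply eqv.measurable hS]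
    rw [← hpre, h1, Measure.volume_eq_prod _ _, MeasureTheory.Measure.prod_apply_symm hS]
    have hae : ∀ᵐ θ' : Fin n → ℝ, volume ((fun x => (x, θ')) ⁻¹' S) = 0 := by
      filter_upwards [measure_eq_zero_iff_ae_notMem.mp hN] with θ' hθ'
      have : {x : ℝ | (x, θ') ∈ S}.Countable := hslice θ' (by simpa using hθ')
      exact this.measure_zero volume
    calc ∫⁻ θ', volume ((fun x => (x, θ')) ⁻¹' S) ∂volume = ∫⁻ _, 0 ∂(volume : Measure (Fin n → ℝ)) :=
          lintegral_congr_ae hae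
      _ = 0 := lintegral_zero

def SPoly {n : ℕ} (f : (Fin n → ℂ) → ℂ) : Prop :=
  ∃ (ι : Type) (_ : Fintype ι) (c : ι → ℂ) (e : ι → Fin n → ℕ),
    ∀ z, f z = ∑ i, c i * ∏ j, z j ^ e i j

namespace SPoly

variable {n : ℕ}

lemma const (a : ℂ) : SPoly (fun _ : Fin n → ℂ => a) :=
  ⟨PUnit, inferInstance, fun _ => a, fun _ _ => 0, fun z => by simp⟩

lemma coord (j₀ : Fin n) : SPoly (fun z : Fin n → ℂ => z j₀) := by
  classical
  refine ⟨PUnit, inferInstance, fun _ => 1, fun _ j => if j = j₀ then 1 else 0, fun z => ?_⟩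
  rw [Fintype.sum_unique]
  rw [Finset.prod_eq_single j₀ (fun b _ hb => by simp [hb]) (by simp)]
  simp

lemma add {f g : (Fin n → ℂ) → ℂ} (hf : SPoly f) (hg : SPoly g) :
    SPoly (fun z => f z + g z) := by
  obtain ⟨ι₁, _, c₁, e₁, h₁⟩ := hf
  obtain ⟨ι₂, _, c₂, e₂, h₂⟩ := hg
  refine ⟨ι₁ ⊕ ι₂, inferInstance, Sum.elim c₁ c₂, Sum.elim e₁ e₂, fun z => ?_⟩
  rw [Fintype.sum_sum_type]
  simp [h₁ z, h₂ z]

lemma mul {f g : (Fin n → ℂ) → ℂ} (hf : SPoly f) (hg : SPoly g) :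
    SPoly (fun z => f z * g z) := by
  obtain ⟨ι₁, _, c₁, e₁, h₁⟩ := hf
  obtain ⟨ι₂, _, c₂, e₂, h₂⟩ := hg
  refine ⟨ι₁ × ι₂, inferInstance, fun p => c₁ p.1 * c₂ p.2,
    fun p j => e₁ p.1 j + e₂ p.2 j, fun z => ?_⟩
  show f z * g z = ∑ i : ι₁ × ι₂, (c₁ i.1 * c₂ i.2) * ∏ j, z j ^ (e₁ i.1 j + e₂ i.2 j)
  rw [h₁ z, h₂ z, Finset.sum_mul_sum, Fintype.sum_prod_type]
  apply Finset.sum_congr rfl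
  intro i _
  apply Finset.sum_congr rfl
  intro i' _
  rw [show (∏ j, z j ^ (e₁ i j + e₂ i' j)) = (∏ j, z j ^ e₁ i j) * ∏ j, z j ^ e₂ i' j by
    rw [← Finset.prod_mul_distrib]
    exact Finset.prod_congr rfl fun j _ => pow_add _ _ _]
  ring

lemma finset_sum {γ : Type*} (s : Finset γ) (f : γ → (Fin n → ℂ) → ℂ)
    (h : ∀ i ∈ s, SPoly (f i)) : SPoly (fun z => ∑ i ∈ s, f i z) := by
  classical
  induction s using Finset.induction_on with
  | empty => simpa using const 0
  | @insert a s' ha ih =>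
    simp only [Finset.sum_insert ha]
    exact (h a (Finset.mem_insert_self a s')).add
      (ih fun i hi => h i (Finset.mem_insert_of_mem hi))

lemma det {k : ℕ} (M : (Fin n → ℂ) → Matrix (Fin k) (Fin k) ℂ)
    (h : ∀ i j, SPoly (fun z => M z i j)) : SPoly (fun z => (M z).det) := by
  have hprod : ∀ (σ : Equiv.Perm (Fin k)), SPoly (fun z => ∏ i, M z (σ i) i) := by
    intro σ
    classical
    induction (Finset.univ : Finset (Fin k)) using Finset.induction_on with
    | empty => simpa using const 1
    | @insert a s' ha ih =>
      simp only [Finset.prod_insert ha]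
      exact (h (σ a) a).mul ih
  simp_rw [Matrix.det_apply']
  exact finset_sum _ _ fun σ _ => (const _).mul (hprod σ)

end SPoly

theorem isPoly_null {n : ℕ} (f : (Fin n → ℂ) → ℂ) (hf : SPoly f) (hw : ∃ z, f z ≠ 0) :
    volume {θ : Fin n → ℝ | f (fun j => Complex.exp (Complex.I * θ j)) = 0} = 0 := by
  obtain ⟨ι, _, c, e, hrep⟩ := hf
  obtain ⟨z₀, hz₀⟩ := hw
  have h := polyNull n ι ‹_› c e ⟨z₀, by rw [← hrep]; exact hz₀⟩
  have hsets : {θ : Fin n → ℝ | f (fun j => Complex.exp (Complex.I * θ j)) = 0}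
      = {θ : Fin n → ℝ | (∑ i, c i * ∏ j, Complex.exp (Complex.I * θ j) ^ e i j) = 0} := by
    ext θ
    rw [Set.mem_setOf_eq, Set.mem_setOf_eq, hrep]
  rw [hsets]
  exact h

lemma measurable_det {α : Type*} [MeasurableSpace α] {k : ℕ}
    (M : α → Matrix (Fin k) (Fin k) ℂ) (h : ∀ i j, Measurable fun a => M a i j) :
    Measurable fun a => (M a).det := by
  simp_rw [Matrix.det_apply']
  exact Finset.measurable_sum _ fun σ _ =>
    (Finset.measurable_prod _ fun i _ => h _ _).const_mul _

lemma exists_good_rows {L m : ℕ} (W : Matrix (Fin L) (Fin m) ℂ) (hW : Wᴴ * W = 1) :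
    ∃ s : Fin m → Fin L, Function.Injective s ∧ (W.submatrix s id).det ≠ 0 := by
  classical
  have hspan : Submodule.span ℂ (Set.range fun j : Fin L => W j) = ⊤ := by
    rw [eq_top_iff]
    rintro y -
    have h1 : (y ᵥ* Wᴴ) ᵥ* W = y := by
      rw [Matrix.vecMul_vecMul, hW, Matrix.vecMul_one]
    have hy : y = ∑ j, ((y ᵥ* Wᴴ) j) • W j := by
      conv_lhs => rw [← h1]
      funext kk
      simp [Matrix.vecMul, dotProduct, Finset.sum_apply]
    rw [hy]
    exact Submodule.sum_mem _ fun j _ =>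
      Submodule.smul_mem _ _ (Submodule.subset_span ⟨j, rfl⟩)
  obtain ⟨b, hbsub, hbspan, hbind⟩ :=
    exists_linearIndependent ℂ (Set.range fun j : Fin L => W j)
  rw [hspan] at hbspan
  have hfin : b.Finite := hbind.setFinite
  haveI := hfin.fintype
  let bas : Module.Basis b ℂ (Fin m → ℂ) := Module.Basis.mk hbind (by rw [Subtype.range_coe, hbspan])
  have hcard : Fintype.card b = m := by
    have h := Module.finrank_eq_card_basis bas
    rw [Module.finrank_fintype_fun_eq_card, Fintype.card_fin] at h
    exact h.symm
  let eb : Fin m ≃ b := (Fintype.equivFinOfCardEq hcard).symm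
  have hmem : ∀ v : b, ∃ j : Fin L, W j = (v : Fin m → ℂ) := fun v => hbsub v.2
  choose idx hidx using hmem
  refine ⟨fun i => idx (eb i), ?_, ?_⟩
  · intro i i' h
    have h' : idx (eb i) = idx (eb i') := h
    have hvv : ((eb i : b) : Fin m → ℂ) = ((eb i' : b) : Fin m → ℂ) := by
      rw [← hidx (eb i), ← hidx (eb i'), h']
    exact eb.injective (Subtype.ext hvv)
  · have hrows : (fun i : Fin m => (W.submatrix (fun i => idx (eb i)) id) i)
        = fun i : Fin m => ((eb i : b) : Fin m → ℂ) := by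
      funext i
      show W (idx (eb i)) = _
      rw [hidx (eb i)]
    have hind : LinearIndependent ℂ
        (fun i : Fin m => (W.submatrix (fun i => idx (eb i)) id) i) := by
      rw [hrows]
      exact hbind.comp eb eb.injective
    have hunit := (Matrix.isUnit_iff_isUnit_det _).mp
      (Matrix.linearIndependent_rows_iff_isUnit.mp hind)
    intro h0
    exact hunit.ne_zero h0

lemma exp_ratio_ne_one {L : ℕ} (hL : 0 < L) (d : ℤ) (hd : d ≠ 0) (hdL : |d| < (L : ℤ)) :
    Complex.exp (2 * Real.pi * Complex.I * d / L) ≠ 1 := by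
  intro h1
  rw [Complex.exp_eq_one_iff] at h1
  obtain ⟨k, hk⟩ := h1
  have hL0 : (L : ℂ) ≠ 0 := by exact_mod_cast hL.ne'
  have hπ : (Real.pi : ℂ) ≠ 0 := by exact_mod_cast Real.pi_ne_zero
  have h2 : (2 : ℂ) * Real.pi * Complex.I ≠ 0 := by
    simp [Complex.I_ne_zero, hπ]
  have hdc : (d : ℂ) = k * L := by
    apply mul_left_cancel₀ h2
    field_simp at hk
    linear_combination (2 * Real.pi * Complex.I) * hk
  have hdz : d = k * L := by exact_mod_cast hdc
  have hk0 : k ≠ 0 := by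
    rintro rfl
    rw [hdz] at hd
    simp at hd
  have hge : (L : ℤ) ≤ |d| := by
    rw [hdz, abs_mul]
    have h1 : (1 : ℤ) ≤ |k| := Int.one_le_abs (by simpa using hk0)
    have h2' : |(L : ℤ)| = L := abs_of_nonneg (by positivity)
    nlinarith [abs_nonneg (L : ℤ)]
  omega

lemma exp_ratio_pow {L : ℕ} (hL : 0 < L) (d : ℤ) :
    Complex.exp (2 * Real.pi * Complex.I * d / L) ^ L = 1 := by
  rw [← Complex.exp_nat_mul]
  have hL0 : (L : ℂ) ≠ 0 := by exact_mod_cast hL.ne'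
  have harg : (L : ℂ) * (2 * Real.pi * Complex.I * d / L) = d * (2 * Real.pi * Complex.I) := by
    field_simp
  rw [harg, Complex.exp_int_mul_two_pi_mul_I]

lemma geom_zero {L : ℕ} (hL : 0 < L) (d : ℤ) (hd : d ≠ 0) (hdL : |d| < (L : ℤ)) :
    ∑ l : Fin L, Complex.exp (2 * Real.pi * Complex.I * d / L) ^ (l : ℕ) = 0 := by
  rw [Fin.sum_univ_eq_sum_range (fun l => Complex.exp (2 * Real.pi * Complex.I * d / L) ^ l) L]
  rw [geom_sum_eq (exp_ratio_ne_one hL d hd hdL)]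
  rw [exp_ratio_pow hL d]
  simp

end Stmt7Aux

open Complex in
/-- If `V ∈ ℂ^{L×r}` is a fixed matrix with orthonormal columns (`r ≤ L`), `R ≤ L`, and
`C` is distributed according to the Haar probability measure on the unitary group `U(L)`
(the unique left- and right-invariant Borel probability measure), then, almost surely,
the `R×r` matrix consisting of the first `R` rows of `C V` has rank `min r R`. -/
theorem stmt7 {L r R : ℕ} (hL : 0 < L) (hr : r ≤ L) (hR : R ≤ L)
    (V : Matrix (Fin L) (Fin r) ℂ) (hV : Vᴴ * V = 1)
    (μ : Measure (Matrix.unitaryGroup (Fin L) ℂ)) [IsProbabilityMeasure μ]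
    (hleft : ∀ U : Matrix.unitaryGroup (Fin L) ℂ,
      Measure.map (fun g : Matrix.unitaryGroup (Fin L) ℂ => U * g) μ = μ)
    (hright : ∀ U : Matrix.unitaryGroup (Fin L) ℂ,
      Measure.map (fun g : Matrix.unitaryGroup (Fin L) ℂ => g * U) μ = μ) :
    ∀ᵐ g : Matrix.unitaryGroup (Fin L) ℂ ∂μ,
      (((g : Matrix (Fin L) (Fin L) ℂ) * V).submatrix (Fin.castLE hR) id).rank =
        min r R := by
  classical
  set m : ℕ := min r R with hm
  have hmr : m ≤ r := min_le_left _ _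
  have hmR : m ≤ R := min_le_right _ _
  have hmL : m ≤ L := hmr.trans hr
  -- the reduced isometry
  set V' : Matrix (Fin L) (Fin m) ℂ := V.submatrix id (Fin.castLE hmr) with hV'def
  have hV' : V'ᴴ * V' = 1 := by
    have h1 : V'ᴴ = Vᴴ.submatrix (Fin.castLE hmr) id := by
      rw [hV'def, Matrix.conjTranspose_submatrix]
    rw [h1, hV'def]
    have h2 := Matrix.submatrix_mul Vᴴ V (Fin.castLE hmr) id (Fin.castLE hmr)
      Function.bijective_id
    rw [← h2, hV]
    ext i k
    simp [Matrix.submatrix_apply, Matrix.one_apply, Fin.castLE_inj]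
  -- the Fourier unitary
  set c0 : ℝ := (Real.sqrt L)⁻¹ with hc0
  have hsqrtpos : (0:ℝ) < Real.sqrt L := Real.sqrt_pos.mpr (by exact_mod_cast hL)
  have hc0pos : 0 < c0 := by rw [hc0]; positivity
  set F : Matrix (Fin L) (Fin L) ℂ :=
    Matrix.of fun j k : Fin L =>
      (c0 : ℂ) * Complex.exp (2 * Real.pi * Complex.I * ((j : ℕ) * (k : ℕ)) / L) with hFdef
  have hFconj : ∀ j l : Fin L, (starRingEnd ℂ) (F j l)
      = (c0 : ℂ) * Complex.exp (-(2 * Real.pi * Complex.I * ((j : ℕ) * (l : ℕ)) / L)) := by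
    intro j l
    simp only [hFdef, Matrix.of_apply, _root_.map_mul, Complex.conj_ofReal, ← Complex.exp_conj]
    congr 2
    simp only [map_div₀, _root_.map_mul, Complex.conj_I, map_ofNat, Complex.conj_ofReal, map_natCast]
    ring
  have key : ∀ j k : Fin L,
      (∑ l, F j l * (starRingEnd ℂ) (F k l)) = if j = k then (1:ℂ) else 0 := by
    intro j k
    have hterm : ∀ l : Fin L, F j l * (starRingEnd ℂ) (F k l)
        = (c0 : ℂ)^2 *
          Complex.exp (2 * Real.pi * Complex.I * ((((j:ℕ) - (k:ℕ) : ℤ)) : ℂ) / L) ^ (l : ℕ) := by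
      intro l
      rw [hFconj k l, ← Complex.exp_nat_mul]
      simp only [hFdef, Matrix.of_apply]
      rw [mul_mul_mul_comm, ← Complex.exp_add, sq]
      congr 1
      have hL0 : (L : ℂ) ≠ 0 := by exact_mod_cast hL.ne'
      field_simp
      push_cast
      ring
    rw [Finset.sum_congr rfl fun l _ => hterm l, ← Finset.mul_sum]
    by_cases hjk : j = k
    · subst hjk
      rw [if_pos rfl]
      simp only [sub_self, Int.cast_zero, mul_zero, zero_div, Complex.exp_zero, one_pow]
      rw [Finset.sum_const, Finset.card_univ, Fintype.card_fin, nsmul_eq_mul, mul_one]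
      have hrr : (c0:ℝ)^2 * L = 1 := by
        rw [hc0, inv_pow, Real.sq_sqrt (by positivity : (0:ℝ) ≤ (L:ℝ))]
        field_simp
      exact_mod_cast congrArg (Complex.ofReal) hrr
    · rw [if_neg hjk]
      have hd0 : (((j:ℕ) - (k:ℕ)) : ℤ) ≠ 0 := by
        rw [sub_ne_zero]
        intro h
        exact hjk (Fin.ext (by exact_mod_cast h))
      have hdL : |(((j:ℕ) - (k:ℕ)) : ℤ)| < (L:ℤ) := by
        have hj := j.isLt
        have hk := k.isLt
        rw [abs_sub_lt_iff]
        omega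
      rw [Stmt7Aux.geom_zero hL _ hd0 hdL, mul_zero]
  have hFU : F ∈ Matrix.unitaryGroup (Fin L) ℂ := by
    rw [Matrix.mem_unitaryGroup_iff]
    ext j k
    rw [Matrix.mul_apply]
    have hstar : ∀ l, (star F) l k = (starRingEnd ℂ) (F k l) := fun l => rfl
    rw [Finset.sum_congr rfl fun l _ => by rw [hstar l], key j k, Matrix.one_apply]
  -- Vandermonde property
  have hFsub : ∀ s : Fin m → Fin L, Function.Injective s →
      (F.submatrix (Fin.castLE hmL) s).det ≠ 0 := by
    intro s hs
    set v : Fin m → ℂ := fun k => Complex.exp (2 * Real.pi * Complex.I * ((s k : ℕ)) / L) with hv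
    have hmat : F.submatrix (Fin.castLE hmL) s = (c0 : ℂ) • (Matrix.vandermonde v)ᵀ := by
      ext i k
      simp only [Matrix.submatrix_apply, hFdef, Matrix.of_apply, Matrix.smul_apply,
        Matrix.transpose_apply, Matrix.vandermonde, Matrix.of_apply, smul_eq_mul, hv]
      congr 1
      rw [← Complex.exp_nat_mul]
      congr 1
      have hL0 : (L : ℂ) ≠ 0 := by exact_mod_cast hL.ne'
      rw [Fin.coe_castLE]
      push_cast
      ring
    rw [hmat, Matrix.det_smul, Matrix.det_transpose, Matrix.det_vandermonde]
    apply mul_ne_zero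
    · apply pow_ne_zero
      exact_mod_cast hc0pos.ne'
    · rw [Finset.prod_ne_zero_iff]
      intro i _
      rw [Finset.prod_ne_zero_iff]
      intro j hj
      rw [sub_ne_zero]
      intro heq
      have hij : s j ≠ s i := fun h => (Finset.mem_Ioi.mp hj).ne' (hs h)
      have hd0 : (((s j : ℕ) - (s i : ℕ)) : ℤ) ≠ 0 := by
        rw [sub_ne_zero]
        intro h
        exact hij (Fin.ext (by exact_mod_cast h))
      have hdL : |(((s j : ℕ) - (s i : ℕ)) : ℤ)| < (L:ℤ) := by
        have h1 := (s j).isLt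
        have h2 := (s i).isLt
        rw [abs_sub_lt_iff]
        omega
      apply Stmt7Aux.exp_ratio_ne_one hL _ hd0 hdL
      have hL0 : (L : ℂ) ≠ 0 := by exact_mod_cast hL.ne'
      have harg : 2 * (Real.pi:ℂ) * Complex.I * ((((s j : ℕ) - (s i : ℕ) : ℤ)) : ℂ) / L
          = (2 * Real.pi * Complex.I * ((s j : ℕ)) / L)
            - (2 * Real.pi * Complex.I * ((s i : ℕ)) / L) := by
        push_cast
        ring
      rw [harg, Complex.exp_sub]
      have heq' : Complex.exp (2 * Real.pi * Complex.I * ((s j : ℕ)) / L)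
          = Complex.exp (2 * Real.pi * Complex.I * ((s i : ℕ)) / L) := heq
      rw [heq', div_self (Complex.exp_ne_zero _)]
  -- the diagonal unitaries
  have hDmem : ∀ θ : Fin L → ℝ,
      (Matrix.diagonal fun j => Complex.exp (Complex.I * θ j)) ∈
        Matrix.unitaryGroup (Fin L) ℂ := by
    intro θ
    rw [Matrix.mem_unitaryGroup_iff, Matrix.star_eq_conjTranspose,
      Matrix.diagonal_conjTranspose, Matrix.diagonal_mul_diagonal]
    have hone : ∀ j : Fin L, Complex.exp (Complex.I * θ j) *
        (star fun j => Complex.exp (Complex.I * θ j)) j = 1 := by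
      intro j
      rw [Pi.star_apply]
      have : (starRingEnd ℂ) (Complex.exp (Complex.I * θ j))
          = Complex.exp (-(Complex.I * θ j)) := by
        rw [← Complex.exp_conj]
        congr 1
        simp only [_root_.map_mul, Complex.conj_I, Complex.conj_ofReal]
        ring
      rw [show star (Complex.exp (Complex.I * θ j)) = (starRingEnd ℂ) (Complex.exp (Complex.I * θ j)) from rfl]
      rw [this, ← Complex.exp_add]
      simp
    rw [show (fun i : Fin L => Complex.exp (Complex.I * θ i) *
        (star fun j => Complex.exp (Complex.I * θ j)) i) = fun _ : Fin L => (1:ℂ) from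
        funext hone, Matrix.diagonal_one]
  set U₀ : Matrix.unitaryGroup (Fin L) ℂ := ⟨F, hFU⟩ with hU₀
  set t : (Fin L → ℝ) → Matrix.unitaryGroup (Fin L) ℂ :=
    fun θ => U₀ * ⟨_, hDmem θ⟩ with ht
  -- the polynomial criterion function
  set Ψ : (Fin L → ℂ) → Matrix (Fin L) (Fin L) ℂ → Matrix (Fin m) (Fin m) ℂ :=
    fun z x => Matrix.of fun i k : Fin m =>
      ∑ j, F (Fin.castLE hmL i) j * z j * (x * V') j k with hΨ
  set Φ : Matrix.unitaryGroup (Fin L) ℂ → ℂ := fun g =>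
    (Matrix.of fun i k : Fin m =>
      ∑ j, (g : Matrix (Fin L) (Fin L) ℂ) (Fin.castLE hmL i) j * V' j k).det with hΦ
  have hΦmeas : Measurable Φ := by
    apply Stmt7Aux.measurable_det
    intro i k
    simp only [Matrix.of_apply]
    apply Finset.measurable_sum
    intro j _
    exact (((measurable_pi_apply j).comp
      ((measurable_pi_apply (Fin.castLE hmL i)).comp measurable_subtype_coe))).mul_const _
  set B : Set (Matrix.unitaryGroup (Fin L) ℂ) := Φ ⁻¹' {0} with hBdef
  have hB : MeasurableSet B := hΦmeas (measurableSet_singleton 0)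
  -- key identity
  have hK1 : ∀ (θ : Fin L → ℝ) (g : Matrix.unitaryGroup (Fin L) ℂ),
      Φ (t θ * g) = (Ψ (fun j => Complex.exp (Complex.I * θ j))
        (g : Matrix (Fin L) (Fin L) ℂ)).det := by
    intro θ g
    have hcoe : ((t θ * g : Matrix.unitaryGroup (Fin L) ℂ) : Matrix (Fin L) (Fin L) ℂ)
        = F * Matrix.diagonal (fun j => Complex.exp (Complex.I * θ j))
          * (g : Matrix (Fin L) (Fin L) ℂ) := rfl
    show (Matrix.of fun i k : Fin m =>
      ∑ j, ((t θ * g : Matrix.unitaryGroup (Fin L) ℂ) : Matrix (Fin L) (Fin L) ℂ)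
        (Fin.castLE hmL i) j * V' j k).det = _
    congr 1
    ext i k
    simp only [Matrix.of_apply, hcoe]
    calc ∑ j, (F * Matrix.diagonal (fun j => Complex.exp (Complex.I * θ j))
          * (g : Matrix (Fin L) (Fin L) ℂ)) (Fin.castLE hmL i) j * V' j k
        = ((F * Matrix.diagonal (fun j => Complex.exp (Complex.I * θ j))
          * (g : Matrix (Fin L) (Fin L) ℂ)) * V') (Fin.castLE hmL i) k := by
          rw [Matrix.mul_apply]
      _ = ((F * Matrix.diagonal (fun j => Complex.exp (Complex.I * θ j)))
          * ((g : Matrix (Fin L) (Fin L) ℂ) * V')) (Fin.castLE hmL i) k := by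
          rw [Matrix.mul_assoc]
      _ = ∑ j, (F * Matrix.diagonal (fun j => Complex.exp (Complex.I * θ j)))
            (Fin.castLE hmL i) j * ((g : Matrix (Fin L) (Fin L) ℂ) * V') j k := by
          rw [Matrix.mul_apply]
      _ = ∑ j, F (Fin.castLE hmL i) j * Complex.exp (Complex.I * θ j)
            * ((g : Matrix (Fin L) (Fin L) ℂ) * V') j k := by
          apply Finset.sum_congr rfl
          intro j _
          rw [Matrix.mul_diagonal]
  -- per-g null sets
  have hpg : ∀ g : Matrix.unitaryGroup (Fin L) ℂ,
      volume {θ : Fin L → ℝ |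
        (Ψ (fun j => Complex.exp (Complex.I * θ j)) (g : Matrix (Fin L) (Fin L) ℂ)).det = 0}
        = 0 := by
    intro g
    have hiso : ((g : Matrix (Fin L) (Fin L) ℂ) * V')ᴴ * ((g : Matrix (Fin L) (Fin L) ℂ) * V')
        = 1 := by
      rw [Matrix.conjTranspose_mul, Matrix.mul_assoc,
        ← Matrix.mul_assoc ((g : Matrix (Fin L) (Fin L) ℂ))ᴴ]
      have hg : ((g : Matrix (Fin L) (Fin L) ℂ))ᴴ * (g : Matrix (Fin L) (Fin L) ℂ) = 1 := by
        rw [← Matrix.star_eq_conjTranspose]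
        exact (Unitary.mem_iff.mp g.2).1
      rw [hg, Matrix.one_mul, hV']
    obtain ⟨s, hsinj, hsdet⟩ := Stmt7Aux.exists_good_rows _ hiso
    have := Stmt7Aux.isPoly_null (fun z => (Ψ z (g : Matrix (Fin L) (Fin L) ℂ)).det) ?_ ?_
    · exact this
    · apply Stmt7Aux.SPoly.det
      intro i k
      show Stmt7Aux.SPoly fun z =>
        ∑ j, F (Fin.castLE hmL i) j * z j * (((g : Matrix (Fin L) (Fin L) ℂ)) * V') j k
      apply Stmt7Aux.SPoly.finset_sum
      intro j _
      exact ((Stmt7Aux.SPoly.const _).mul (Stmt7Aux.SPoly.coord j)).mul (Stmt7Aux.SPoly.const _)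
    · refine ⟨fun j => if j ∈ Finset.image s Finset.univ then (1:ℂ) else 0, ?_⟩
      have hprod : Ψ (fun j => if j ∈ Finset.image s Finset.univ then (1:ℂ) else 0)
          (g : Matrix (Fin L) (Fin L) ℂ)
          = (F.submatrix (Fin.castLE hmL) s)
            * ((((g : Matrix (Fin L) (Fin L) ℂ)) * V').submatrix s id) := by
        ext i k
        rw [Matrix.mul_apply]
        show (∑ j, F (Fin.castLE hmL i) j * (if j ∈ Finset.image s Finset.univ then (1:ℂ) else 0)
          * (((g : Matrix (Fin L) (Fin L) ℂ)) * V') j k) = _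
        rw [Finset.sum_congr rfl (fun j _ => by
          rw [mul_ite, mul_one, mul_zero, ite_mul, zero_mul])]
        rw [Finset.sum_ite_mem, Finset.univ_inter,
          Finset.sum_image (fun a _ b _ h => hsinj h)]
        apply Finset.sum_congr rfl
        intro i' _
        simp [Matrix.submatrix_apply]
      show (Ψ _ _).det ≠ 0
      rw [hprod, Matrix.det_mul]
      exact mul_ne_zero (hFsub s hsinj) hsdet
  -- the parameter measure
  set lam : Measure (Fin L → ℝ) :=
    volume.restrict (Set.univ.pi fun _ : Fin L => Set.Icc (0:ℝ) 1) with hlam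
  have hlamle : ∀ A : Set (Fin L → ℝ), MeasurableSet A → lam A ≤ volume A := by
    intro A hA
    rw [hlam, Measure.restrict_apply hA]
    exact measure_mono Set.inter_subset_left
  have hlamprob : IsProbabilityMeasure lam := by
    constructor
    rw [hlam, Measure.restrict_apply MeasurableSet.univ, Set.univ_inter, volume_pi_pi]
    simp [Real.volume_Icc]
  -- measurability of left translations
  have hmulmeas : ∀ U : Matrix.unitaryGroup (Fin L) ℂ,
      Measurable fun g : Matrix.unitaryGroup (Fin L) ℂ => U * g := by
    intro U
    have hentry : ∀ a b : Fin L, Measurable fun x : Matrix (Fin L) (Fin L) ℂ => x a b := by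
      intro a b
      exact (measurable_pi_apply b).comp (measurable_pi_apply a)
    have h1 : Measurable fun x : Matrix (Fin L) (Fin L) ℂ =>
        (U : Matrix (Fin L) (Fin L) ℂ) * x := by
      apply measurable_pi_lambda
      intro i
      apply measurable_pi_lambda
      intro k
      simp only [Matrix.mul_apply]
      exact Finset.measurable_sum _ fun l _ => (hentry l k).const_mul _
    exact Measurable.subtype_mk (h1.comp measurable_subtype_coe)
  -- the big set
  set S : Set ((Fin L → ℝ) × Matrix.unitaryGroup (Fin L) ℂ) :=
    {q | Φ (t q.1 * q.2) = 0} with hSset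
  have hSmeas : MeasurableSet S := by
    have hfun : Measurable fun q : (Fin L → ℝ) × Matrix.unitaryGroup (Fin L) ℂ =>
        Φ (t q.1 * q.2) := by
      have heq : (fun q : (Fin L → ℝ) × Matrix.unitaryGroup (Fin L) ℂ => Φ (t q.1 * q.2))
          = fun q => (Ψ (fun j => Complex.exp (Complex.I * q.1 j))
            ((q.2 : Matrix (Fin L) (Fin L) ℂ))).det := by
        funext q
        exact hK1 q.1 q.2
      rw [heq]
      apply Stmt7Aux.measurable_det
      intro i k
      show Measurable fun q : (Fin L → ℝ) × Matrix.unitaryGroup (Fin L) ℂ =>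
        ∑ j, F (Fin.castLE hmL i) j * Complex.exp (Complex.I * q.1 j)
          * (((q.2 : Matrix (Fin L) (Fin L) ℂ)) * V') j k
      apply Finset.measurable_sum
      intro j _
      apply Measurable.mul
      · apply Measurable.const_mul
        exact Complex.measurable_exp.comp (measurable_const.mul
          (Complex.measurable_ofReal.comp ((measurable_pi_apply j).comp measurable_fst)))
      · simp only [Matrix.mul_apply]
        exact Finset.measurable_sum _ fun l _ =>
          (((measurable_pi_apply l).comp ((measurable_pi_apply j).comp
            (measurable_subtype_coe.comp measurable_snd)))).mul_const _
    exact hfun (measurableSet_singleton 0)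
  haveI : IsProbabilityMeasure lam := hlamprob
  -- Fubini, first way
  have hW1 : (lam.prod μ) S = μ B := by
    rw [Measure.prod_apply hSmeas]
    have h1 : ∀ θ : Fin L → ℝ, μ (Prod.mk θ ⁻¹' S) = μ B := by
      intro θ
      have hpre : Prod.mk θ ⁻¹' S = (fun g => t θ * g) ⁻¹' B := rfl
      rw [hpre]
      conv_rhs => rw [← hleft (t θ)]
      rw [Measure.map_apply (hmulmeas (t θ)) hB]
    rw [lintegral_congr h1, lintegral_const, measure_univ, mul_one]
  -- Fubini, second way
  have hW2 : (lam.prod μ) S = 0 := by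
    rw [Measure.prod_apply_symm hSmeas]
    have h2 : ∀ g : Matrix.unitaryGroup (Fin L) ℂ, lam ((fun θ => (θ, g)) ⁻¹' S) = 0 := by
      intro g
      have hms : MeasurableSet ((fun θ : Fin L → ℝ => (θ, g)) ⁻¹' S) :=
        (measurable_id.prodMk measurable_const) hSmeas
      have hsub : ((fun θ : Fin L → ℝ => (θ, g)) ⁻¹' S)
          = {θ : Fin L → ℝ | (Ψ (fun j => Complex.exp (Complex.I * θ j))
              (g : Matrix (Fin L) (Fin L) ℂ)).det = 0} := by
        ext θ
        simp only [Set.mem_preimage, hSset, Set.mem_setOf_eq, hK1 θ g]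
      have hv : volume ((fun θ : Fin L → ℝ => (θ, g)) ⁻¹' S) = 0 := by
        rw [hsub]
        exact hpg g
      exact le_antisymm (le_trans (hlamle _ hms) (le_of_eq hv)) (by simp)
    rw [lintegral_congr h2, lintegral_zero]
  have hBnull : μ B = 0 := by rw [← hW1, hW2]
  -- the rank claim
  have claim1 : ∀ g : Matrix.unitaryGroup (Fin L) ℂ, Φ g ≠ 0 →
      (((g : Matrix (Fin L) (Fin L) ℂ) * V).submatrix (Fin.castLE hR) id).rank = m := by
    intro g hg
    set M : Matrix (Fin R) (Fin r) ℂ :=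
      ((g : Matrix (Fin L) (Fin L) ℂ) * V).submatrix (Fin.castLE hR) id with hM
    have hsubM : (Matrix.of fun i k : Fin m =>
        ∑ j, (g : Matrix (Fin L) (Fin L) ℂ) (Fin.castLE hmL i) j * V' j k)
        = M.submatrix (Fin.castLE hmR) (Fin.castLE hmr) := by
      ext i k
      simp only [Matrix.of_apply, hM, Matrix.submatrix_apply, Matrix.mul_apply, hV'def, id]
      have hcast : Fin.castLE hR (Fin.castLE hmR i) = Fin.castLE hmL i := rfl
      rw [hcast]
    have hunit : IsUnit (M.submatrix (Fin.castLE hmR) (Fin.castLE hmr)) := by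
      rw [Matrix.isUnit_iff_isUnit_det, isUnit_iff_ne_zero, ← hsubM]
      exact hg
    have hrs : (M.submatrix (Fin.castLE hmR) (Fin.castLE hmr)).rank = m := by
      rw [Matrix.rank_of_isUnit _ hunit, Fintype.card_fin]
    have hle2 : (M.submatrix (Fin.castLE hmR) (Fin.castLE hmr)).rank ≤ M.rank := by
      have e1 : ((1 : Matrix (Fin R) (Fin R) ℂ).submatrix (Fin.castLE hmR)
            (⇑(Equiv.refl (Fin R))))
          * (M * ((1 : Matrix (Fin r) (Fin r) ℂ).submatrix (⇑(Equiv.refl (Fin r)))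
            (Fin.castLE hmr)))
          = M.submatrix (Fin.castLE hmR) (Fin.castLE hmr) := by
        rw [Matrix.mul_submatrix_one, Matrix.one_submatrix_mul, Matrix.submatrix_submatrix]
        simp
      rw [← e1]
      exact le_trans (Matrix.rank_mul_le_right _ _) (Matrix.rank_mul_le_left _ _)
    have hub : M.rank ≤ m := by
      apply le_min
      · simpa using M.rank_le_card_width
      · simpa using M.rank_le_card_height
    exact le_antisymm hub (hrs ▸ hle2)
  -- conclusion
  rw [MeasureTheory.ae_iff]
  apply measure_mono_null _ hBnull
  intro g hgm
  simp only [Set.mem_setOf_eq] at hgm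
  by_contra hgB
  have hΦg : Φ g ≠ 0 := fun h0 => hgB (Set.mem_preimage.mpr (by simpa using h0))
  exact hgm (claim1 g hΦg)
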